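/- Let V be a finite-dimensional complex vector space and G ⊆ GL(V) a finite abelian p-group. Suppose G preserves a hypersurface R ⊂ P(V) of degree less than p. Then G has a fixed point on R. -/

import Mathlib

open scoped MatrixGroups

/-- The action of an element of `GL_n(ℂ)` on the projective space `P(V)`, `V = ℂ^n`. -/
noncomputable def glAct {n : ℕ} (A : GL (Fin n) ℂ) :
    Projectivization ℂ (Fin n → ℂ) → Projectivization ℂ (Fin n → ℂ) :=
  Projectivization.map (Matrix.GeneralLinearGroup.toLin A).toLinearEquiv.toLinearMap
    (Matrix.GeneralLinearGroup.toLin A).toLinearEquiv.injective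

namespace Stmt9Aux

open MvPolynomial

variable {n : ℕ}

lemma degree_add' (a b : Fin n →₀ ℕ) : (a + b).degree = a.degree + b.degree := by
  rw [Finsupp.degree_eq_weight_one]
  exact map_add _ a b

lemma isHom_iff {φ : MvPolynomial (Fin n) ℂ} {k : ℕ} :
    φ.IsHomogeneous k ↔ ∀ m ∈ φ.support, m.degree = k := by
  unfold IsHomogeneous IsWeightedHomogeneous
  simp only [MvPolynomial.mem_support_iff, Finsupp.degree_eq_weight_one]
  exact Iff.rfl

section L1

lemma hc_mul_inf {a b : MvPolynomial (Fin n) ℂ} {Ba Bb : ℕ}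
    (hA : ∀ m ∈ a.support, Ba ≤ m.degree) (hB : ∀ m ∈ b.support, Bb ≤ m.degree) :
    homogeneousComponent (Ba + Bb) (a * b)
      = homogeneousComponent Ba a * homogeneousComponent Bb b := by
  ext m
  rw [coeff_homogeneousComponent, MvPolynomial.coeff_mul, MvPolynomial.coeff_mul]
  by_cases hm : m.degree = Ba + Bb
  · rw [if_pos hm]
    refine Finset.sum_congr rfl ?_
    rintro ⟨u, v⟩ huv
    rw [Finset.HasAntidiagonal.mem_antidiagonal] at huv
    dsimp only
    rw [coeff_homogeneousComponent, coeff_homogeneousComponent]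
    have hsum : u.degree + v.degree = Ba + Bb := by rw [← degree_add', huv, hm]
    by_cases hu : u.degree = Ba
    · rw [if_pos hu, if_pos (by omega)]
    · rw [if_neg hu]
      by_cases hu' : MvPolynomial.coeff u a = 0
      · rw [hu', zero_mul, zero_mul]
      · have h1 : Ba ≤ u.degree := hA u (by simpa [MvPolynomial.mem_support_iff] using hu')
        have h2 : v.degree < Bb := by omega
        have hv : MvPolynomial.coeff v b = 0 := by
          by_contra hv'
          exact absurd (hB v (by simpa [MvPolynomial.mem_support_iff] using hv')) (by omega)
        rw [hv, mul_zero, zero_mul]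
  · rw [if_neg hm]
    symm
    apply Finset.sum_eq_zero
    rintro ⟨u, v⟩ huv
    rw [Finset.HasAntidiagonal.mem_antidiagonal] at huv
    dsimp only
    rw [coeff_homogeneousComponent, coeff_homogeneousComponent]
    by_cases hu : u.degree = Ba
    · have hv : v.degree ≠ Bb := by
        intro h; apply hm; rw [← huv, degree_add', hu, h]
      rw [if_neg hv, mul_zero]
    · rw [if_neg hu, zero_mul]

lemma hc_mul_sup {a b : MvPolynomial (Fin n) ℂ} {Ta Tb : ℕ}
    (hA : ∀ m ∈ a.support, m.degree ≤ Ta) (hB : ∀ m ∈ b.support, m.degree ≤ Tb) :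
    homogeneousComponent (Ta + Tb) (a * b)
      = homogeneousComponent Ta a * homogeneousComponent Tb b := by
  ext m
  rw [coeff_homogeneousComponent, MvPolynomial.coeff_mul, MvPolynomial.coeff_mul]
  by_cases hm : m.degree = Ta + Tb
  · rw [if_pos hm]
    refine Finset.sum_congr rfl ?_
    rintro ⟨u, v⟩ huv
    rw [Finset.HasAntidiagonal.mem_antidiagonal] at huv
    dsimp only
    rw [coeff_homogeneousComponent, coeff_homogeneousComponent]
    have hsum : u.degree + v.degree = Ta + Tb := by rw [← degree_add', huv, hm]
    by_cases hu : u.degree = Ta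
    · rw [if_pos hu, if_pos (by omega)]
    · rw [if_neg hu]
      by_cases hu' : MvPolynomial.coeff u a = 0
      · rw [hu', zero_mul, zero_mul]
      · have h1 : u.degree ≤ Ta := hA u (by simpa [MvPolynomial.mem_support_iff] using hu')
        have h2 : Tb < v.degree := by omega
        have hv : MvPolynomial.coeff v b = 0 := by
          by_contra hv'
          exact absurd (hB v (by simpa [MvPolynomial.mem_support_iff] using hv')) (by omega)
        rw [hv, mul_zero, zero_mul]
  · rw [if_neg hm]
    symm
    apply Finset.sum_eq_zero
    rintro ⟨u, v⟩ huv
    rw [Finset.HasAntidiagonal.mem_antidiagonal] at huv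
    dsimp only
    rw [coeff_homogeneousComponent, coeff_homogeneousComponent]
    by_cases hu : u.degree = Ta
    · have hv : v.degree ≠ Tb := by
        intro h; apply hm; rw [← huv, degree_add', hu, h]
      rw [if_neg hv, mul_zero]
    · rw [if_neg hu, zero_mul]

/-- Factors of a homogeneous polynomial (over `ℂ`) are homogeneous. -/
lemma isHomogeneous_of_mul {a b : MvPolynomial (Fin n) ℂ} {d : ℕ}
    (h : (a * b).IsHomogeneous d) (ha : a ≠ 0) (hb : b ≠ 0) :
    ∃ da db : ℕ, da + db = d ∧ a.IsHomogeneous da ∧ b.IsHomogeneous db := by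
  have hsa : a.support.Nonempty := support_nonempty.2 ha
  have hsb : b.support.Nonempty := support_nonempty.2 hb
  set Ba := a.support.inf' hsa Finsupp.degree with hBa
  set Bb := b.support.inf' hsb Finsupp.degree with hBb
  set Ta := a.support.sup' hsa Finsupp.degree with hTa
  set Tb := b.support.sup' hsb Finsupp.degree with hTb
  have hmemhom : ∀ k : ℕ, homogeneousComponent k (a * b) ≠ 0 → k = d := by
    intro k hk
    by_contra hne
    apply hk
    apply homogeneousComponent_eq_zero'
    intro m hm
    rw [isHom_iff.1 h m hm]
    omega
  have hcompa : ∀ (B : ℕ), (∃ m ∈ a.support, m.degree = B) → homogeneousComponent B a ≠ 0 := by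
    intro B hB hzero
    obtain ⟨m, hm, hmd⟩ := hB
    have := coeff_homogeneousComponent (σ := Fin n) (R := ℂ) B a m
    rw [hzero, if_pos hmd] at this
    exact (MvPolynomial.mem_support_iff.1 hm) this.symm
  have hcompb : ∀ (B : ℕ), (∃ m ∈ b.support, m.degree = B) → homogeneousComponent B b ≠ 0 := by
    intro B hB hzero
    obtain ⟨m, hm, hmd⟩ := hB
    have := coeff_homogeneousComponent (σ := Fin n) (R := ℂ) B b m
    rw [hzero, if_pos hmd] at this
    exact (MvPolynomial.mem_support_iff.1 hm) this.symm
  have hBd : Ba + Bb = d := by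
    apply hmemhom
    rw [hc_mul_inf (fun m hm => Finset.inf'_le _ hm) (fun m hm => Finset.inf'_le _ hm)]
    apply mul_ne_zero
    · apply hcompa
      obtain ⟨m, hm, hmd⟩ := Finset.exists_mem_eq_inf' hsa Finsupp.degree
      exact ⟨m, hm, hmd.symm⟩
    · apply hcompb
      obtain ⟨m, hm, hmd⟩ := Finset.exists_mem_eq_inf' hsb Finsupp.degree
      exact ⟨m, hm, hmd.symm⟩
  have hTd : Ta + Tb = d := by
    apply hmemhom
    rw [hc_mul_sup (fun m hm => Finset.le_sup' _ hm) (fun m hm => Finset.le_sup' _ hm)]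
    apply mul_ne_zero
    · apply hcompa
      obtain ⟨m, hm, hmd⟩ := Finset.exists_mem_eq_sup' hsa Finsupp.degree
      exact ⟨m, hm, hmd.symm⟩
    · apply hcompb
      obtain ⟨m, hm, hmd⟩ := Finset.exists_mem_eq_sup' hsb Finsupp.degree
      exact ⟨m, hm, hmd.symm⟩
  obtain ⟨ma, hma⟩ := hsa
  obtain ⟨mb, hmb⟩ := hsb
  have h1 : Ba ≤ Ta := le_trans (Finset.inf'_le _ hma) (Finset.le_sup' _ hma)
  have h2 : Bb ≤ Tb := le_trans (Finset.inf'_le _ hmb) (Finset.le_sup' _ hmb)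
  have hBaTa : Ba = Ta := by omega
  have hBbTb : Bb = Tb := by omega
  refine ⟨Ta, Tb, hTd, ?_, ?_⟩
  · rw [isHom_iff]
    intro m hm
    have l1 : Ba ≤ m.degree := Finset.inf'_le _ hm
    have l2 : m.degree ≤ Ta := Finset.le_sup' _ hm
    omega
  · rw [isHom_iff]
    intro m hm
    have l1 : Bb ≤ m.degree := Finset.inf'_le _ hm
    have l2 : m.degree ≤ Tb := Finset.le_sup' _ hm
    omega

end L1

lemma eq_C_of_isHomogeneous_zero {φ : MvPolynomial (Fin n) ℂ} (h : φ.IsHomogeneous 0) :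
    φ = C (coeff 0 φ) := by
  ext m
  by_cases hm : m = 0
  · subst hm; simp
  · rw [coeff_C, if_neg (Ne.symm hm)]
    apply h.coeff_eq_zero
    exact fun hd => hm ((Finsupp.degree_eq_zero_iff m).1 hd)

lemma eval_smul_of_isHomogeneous {φ : MvPolynomial (Fin n) ℂ} {k : ℕ}
    (h : φ.IsHomogeneous k) (c : ℂ) (x : Fin n → ℂ) :
    eval (c • x) φ = c ^ k * eval x φ := by
  rw [eval_eq, eval_eq, Finset.mul_sum]
  refine Finset.sum_congr rfl fun m hm => ?_
  have hdeg : m.degree = k := isHom_iff.1 h m hm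
  have : ∏ i ∈ m.support, (c • x) i ^ m i
      = c ^ k * ∏ i ∈ m.support, x i ^ m i := by
    simp only [Pi.smul_apply, smul_eq_mul, mul_pow]
    rw [Finset.prod_mul_distrib, Finset.prod_pow_eq_pow_sum]
    rw [show ∑ i ∈ m.support, m i = k from hdeg ▸ rfl]
  rw [this]; ring

/-- Substitution of a linear change of coordinates. -/
noncomputable def subA (A : Matrix (Fin n) (Fin n) ℂ) :
    MvPolynomial (Fin n) ℂ →ₐ[ℂ] MvPolynomial (Fin n) ℂ :=
  aeval fun i => ∑ j, C (A i j) * X j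

lemma eval_subA (A : Matrix (Fin n) (Fin n) ℂ) (φ : MvPolynomial (Fin n) ℂ) (x : Fin n → ℂ) :
    eval x (subA A φ) = eval (A.mulVec x) φ := by
  induction φ using MvPolynomial.induction_on with
  | C a => simp [subA]
  | add u v hu hv => simp [map_add, hu, hv]
  | mul_X u i hu =>
      simp only [subA, map_mul, aeval_X, eval_mul, hu, eval_X]
      congr 1
      simp [Matrix.mulVec, dotProduct]

lemma subA_subA (A B : Matrix (Fin n) (Fin n) ℂ) (φ : MvPolynomial (Fin n) ℂ) :
    subA A (subA B φ) = subA (B * A) φ := by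
  have : (subA A).comp (subA B) = subA (B * A) := by
    apply algHom_ext
    intro i
    simp only [AlgHom.coe_comp, Function.comp_apply, subA, aeval_X, map_sum, map_mul, aeval_C]
    simp only [Matrix.mul_apply, map_sum, Finset.sum_mul, Finset.mul_sum]
    rw [Finset.sum_comm]
    refine Finset.sum_congr rfl fun j _ => Finset.sum_congr rfl fun k _ => ?_
    simp [algebraMap_eq, mul_comm, mul_assoc, mul_left_comm]
  exact DFunLike.congr_fun this φ

lemma subA_one (φ : MvPolynomial (Fin n) ℂ) : subA (1 : Matrix (Fin n) (Fin n) ℂ) φ = φ := by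
  have : subA (1 : Matrix (Fin n) (Fin n) ℂ) = AlgHom.id ℂ _ := by
    apply algHom_ext
    intro i
    simp [subA, Matrix.one_apply]
  rw [this]; rfl

/-- `subA` of an invertible matrix, as an algebra equivalence. -/
noncomputable def subE (g : GL (Fin n) ℂ) :
    MvPolynomial (Fin n) ℂ ≃ₐ[ℂ] MvPolynomial (Fin n) ℂ :=
  AlgEquiv.ofAlgHom (subA (g : Matrix (Fin n) (Fin n) ℂ)) (subA ((g⁻¹ : GL (Fin n) ℂ) : Matrix (Fin n) (Fin n) ℂ))
    (by
      apply MvPolynomial.algHom_ext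
      intro i
      rw [AlgHom.comp_apply]
      rw [subA_subA,
        show ((g⁻¹ : GL (Fin n) ℂ) : Matrix (Fin n) (Fin n) ℂ) * (g : Matrix (Fin n) (Fin n) ℂ) = 1 from g.inv_mul,
        subA_one]
      rfl)
    (by
      apply MvPolynomial.algHom_ext
      intro i
      rw [AlgHom.comp_apply]
      rw [subA_subA,
        show (g : Matrix (Fin n) (Fin n) ℂ) * ((g⁻¹ : GL (Fin n) ℂ) : Matrix (Fin n) (Fin n) ℂ) = 1 from g.mul_inv,
        subA_one]
      rfl)

lemma subE_apply (g : GL (Fin n) ℂ) (φ : MvPolynomial (Fin n) ℂ) :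
    subE g φ = subA (g : Matrix (Fin n) (Fin n) ℂ) φ := rfl

lemma prime_subA {g : GL (Fin n) ℂ} {q : MvPolynomial (Fin n) ℂ} (hq : Prime q) :
    Prime (subA (g : Matrix (Fin n) (Fin n) ℂ) q) :=
  (MulEquiv.prime_iff (subE g).toRingEquiv.toMulEquiv (p := q)).2 hq

lemma assoc_subA (g : GL (Fin n) ℂ) {a b : MvPolynomial (Fin n) ℂ} (h : Associated a b) :
    Associated (subA (g : Matrix (Fin n) (Fin n) ℂ) a) (subA (g : Matrix (Fin n) (Fin n) ℂ) b) := by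
  obtain ⟨u, hu⟩ := h
  refine ⟨Units.map ((subE g) : MvPolynomial (Fin n) ℂ →* MvPolynomial (Fin n) ℂ) u, ?_⟩
  have : subA (g : Matrix (Fin n) (Fin n) ℂ) (a * u) = subA _ a * subA _ (u : MvPolynomial (Fin n) ℂ) :=
    map_mul _ _ _
  rw [← hu, this]
  rfl

lemma subA_isHomogeneous (A : Matrix (Fin n) (Fin n) ℂ) {q : MvPolynomial (Fin n) ℂ} {e : ℕ}
    (h : q.IsHomogeneous e) : (subA A q).IsHomogeneous e := by
  have := h.aeval (fun i => ∑ j, C (A i j) * X j)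
    (fun i => IsHomogeneous.sum _ _ _ (fun j _ => isHomogeneous_C_mul_X (A i j) j))
  rwa [one_mul] at this

/-- Nullstellensatz consequence. -/
lemma dvd_pow_of_vanish (f g : MvPolynomial (Fin n) ℂ)
    (h : ∀ x, eval x f = 0 → eval x g = 0) : ∃ N : ℕ, f ∣ g ^ N := by
  have hg : g ∈ vanishingIdeal ℂ (zeroLocus ℂ (Ideal.span {f})) := by
    rw [mem_vanishingIdeal_iff]
    intro x hx
    exact h x (hx f (Ideal.subset_span rfl))
  rw [vanishingIdeal_zeroLocus_eq_radical] at hg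
  obtain ⟨N, hN⟩ := hg
  exact ⟨N, Ideal.mem_span_singleton.1 hN⟩

/-- The linear endomorphism of a `GL` element. -/
noncomputable def TL (g : GL (Fin n) ℂ) : Module.End ℂ (Fin n → ℂ) :=
  (Matrix.GeneralLinearGroup.toLin g).toLinearEquiv.toLinearMap

lemma TL_apply (g : GL (Fin n) ℂ) (v : Fin n → ℂ) :
    TL g v = (g : Matrix (Fin n) (Fin n) ℂ).mulVec v := rfl

lemma TL_mul (g h : GL (Fin n) ℂ) : TL (g * h) = TL g * TL h := by
  apply LinearMap.ext
  intro v
  rw [Module.End.mul_apply, TL_apply, TL_apply, TL_apply, Units.val_mul, Matrix.mulVec_mulVec]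

lemma TL_one : TL (1 : GL (Fin n) ℂ) = 1 := by
  apply LinearMap.ext
  intro v
  rw [TL_apply, Module.End.one_apply, Units.val_one, Matrix.one_mulVec]

lemma TL_pow (g : GL (Fin n) ℂ) (m : ℕ) : TL (g ^ m) = (TL g) ^ m := by
  induction m with
  | zero => simp [TL_one]
  | succ m ih => rw [pow_succ, pow_succ, TL_mul, ih]

lemma glAct_mk (g : GL (Fin n) ℂ) (v : Fin n → ℂ) (hv : v ≠ 0) :
    glAct g (Projectivization.mk ℂ v hv)
      = Projectivization.mk ℂ ((g : Matrix (Fin n) (Fin n) ℂ).mulVec v)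
          (by
            rw [← TL_apply]
            intro hz
            exact hv ((Matrix.GeneralLinearGroup.toLin g).toLinearEquiv.map_eq_zero_iff.1 hz)) := by
  rw [glAct, Projectivization.map_mk]
  rw [Projectivization.mk_eq_mk_iff]
  exact ⟨1, by simpa using (TL_apply g v).symm⟩

end Stmt9Aux

open Stmt9Aux MvPolynomial

/-- Let `V` be a finite-dimensional complex vector space and `G ⊆ GL(V)` a finite abelian
`p`-group. Suppose `G` preserves a hypersurface `R ⊂ P(V)` of degree less than `p` (the zero
locus of a nonzero homogeneous polynomial `f` of degree `d`, `1 ≤ d < p`). Then `G` has a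
fixed point on `R`. -/
theorem stmt9 (p n : ℕ) (hp : p.Prime) (hn : 2 ≤ n)
    (G : Subgroup (GL (Fin n) ℂ)) [Finite G] (hG : IsPGroup p G)
    (hab : ∀ a b : G, a * b = b * a)
    (d : ℕ) (hd1 : 1 ≤ d) (hdp : d < p)
    (f : MvPolynomial (Fin n) ℂ) (hf0 : f ≠ 0) (hfh : f.IsHomogeneous d)
    (R : Set (Projectivization ℂ (Fin n → ℂ)))
    (hR : R = {x | MvPolynomial.eval x.rep f = 0})
    (hstab : ∀ g ∈ G, ∀ x ∈ R, glAct g x ∈ R) :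
    ∃ x ∈ R, ∀ g ∈ G, glAct g x = x := by
  classical
  -- evaluation of f at a representative
  have hrep : ∀ (v : Fin n → ℂ) (hv : v ≠ 0),
      eval (Projectivization.mk ℂ v hv).rep f = 0 ↔ eval v f = 0 := by
    intro v hv
    obtain ⟨a, ha⟩ := Projectivization.exists_smul_eq_mk_rep ℂ v hv
    rw [← ha, Units.smul_def, eval_smul_of_isHomogeneous hfh]
    constructor
    · intro h
      rcases mul_eq_zero.1 h with h | h
      · exact absurd h (pow_ne_zero _ a.ne_zero)
      · exact h
    · intro h; rw [h, mul_zero]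
  -- affine stability
  have hZ : ∀ g : G, ∀ x : Fin n → ℂ, eval x f = 0 →
      eval (((g : GL (Fin n) ℂ) : Matrix (Fin n) (Fin n) ℂ).mulVec x) f = 0 := by
    intro g x hx
    by_cases hx0 : x = 0
    · subst hx0
      rwa [Matrix.mulVec_zero]
    · have hmem : Projectivization.mk ℂ x hx0 ∈ R := by
        rw [hR]; exact (hrep x hx0).2 hx
      have := hstab (g : GL (Fin n) ℂ) g.2 _ hmem
      rw [glAct_mk] at this
      rw [hR] at this
      exact (hrep _ _).1 this
  -- semisimultaneous diagonalization
  have hsemis : ∀ g : G, (TL (g : GL (Fin n) ℂ)).IsFinitelySemisimple := by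
    intro g
    obtain ⟨k, hk⟩ := hG g
    have hTL1 : (TL (g : GL (Fin n) ℂ)) ^ (p ^ k) = 1 := by
      rw [← TL_pow]
      have : ((g : GL (Fin n) ℂ)) ^ (p ^ k) = 1 := by
        rw [← Subgroup.coe_pow, hk, Subgroup.coe_one]
      rw [this, TL_one]
    have haev : Polynomial.aeval (TL (g : GL (Fin n) ℂ))
        ((Polynomial.X : Polynomial ℂ) ^ (p ^ k) - 1) = 0 := by
      rw [map_sub, map_pow, Polynomial.aeval_X, map_one, hTL1, sub_self]
    have hsq : Squarefree ((Polynomial.X : Polynomial ℂ) ^ (p ^ k) - 1) := by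
      have : ((Polynomial.X : Polynomial ℂ) ^ (p ^ k) - Polynomial.C 1).Separable :=
        Polynomial.separable_X_pow_sub_C (1 : ℂ)
          (by
            simp only [Nat.cast_pow, ne_eq, pow_eq_zero_iff', Nat.cast_eq_zero]
            exact fun h => hp.ne_zero h.1) one_ne_zero
      rw [Polynomial.C_1] at this
      exact this.squarefree
    exact (Module.End.isSemisimple_of_squarefree_aeval_eq_zero hsq haev).isFinitelySemisimple
  have hcomm : Pairwise fun (a b : G) => Commute (TL (a : GL (Fin n) ℂ)) (TL (b : GL (Fin n) ℂ)) := by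
    intro a b _
    unfold Commute SemiconjBy
    rw [← TL_mul, ← TL_mul]
    congr 1
    rw [← Subgroup.coe_mul, ← Subgroup.coe_mul, hab]
  have htop : ⨆ χ : G → ℂ, ⨅ g : G, Module.End.eigenspace (TL (g : GL (Fin n) ℂ)) (χ g) = ⊤ := by
    have h := Module.End.iSup_iInf_maxGenEigenspace_eq_top_of_iSup_maxGenEigenspace_eq_top_of_commute
      (fun g : G => TL (g : GL (Fin n) ℂ)) hcomm
      (fun g => Module.End.iSup_maxGenEigenspace_eq_top _)
    have heq : ∀ (g : G) (μ : ℂ), (TL (g : GL (Fin n) ℂ)).maxGenEigenspace μ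
        = (TL (g : GL (Fin n) ℂ)).eigenspace μ := fun g => (hsemis g).maxGenEigenspace_eq_eigenspace
    simp_rw [heq] at h
    exact h
  -- extract an eigenbasis
  set S : Set (Fin n → ℂ) :=
    {v | ∃ χ : G → ℂ, ∀ g : G, TL (g : GL (Fin n) ℂ) v = χ g • v} with hS
  have hspan : ⊤ ≤ Submodule.span ℂ S := by
    rw [← htop]
    apply iSup_le
    intro χ v hv
    apply Submodule.subset_span
    refine ⟨χ, fun g => ?_⟩
    exact Module.End.mem_eigenspace_iff.1 (Submodule.mem_iInf _ |>.1 hv g)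
  let b := Module.Basis.ofSpan hspan
  have hbS : ∀ i, (b i : Fin n → ℂ) ∈ S := by
    intro i
    apply Module.Basis.ofSpan_subset hspan
    exact Set.mem_range_self i
  choose χ hχ using fun i => (hbS i : ∃ χ0 : G → ℂ, ∀ g : G, TL (g : GL (Fin n) ℂ) (b i) = χ0 g • b i)
  -- eigenvalues are roots of unity
  have hpowv : ∀ i (g : G) (m : ℕ),
      TL ((g : GL (Fin n) ℂ) ^ m) (b i) = (χ i g) ^ m • b i := by
    intro i g m
    induction m with
    | zero => simp [TL_one]
    | succ m ih =>
        rw [pow_succ, TL_mul, Module.End.mul_apply, hχ, map_smul, ih, smul_smul, ← pow_succ']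
  have hroot : ∀ i (g : G), ∃ k : ℕ, (χ i g) ^ (p ^ k) = 1 := by
    intro i g
    obtain ⟨k, hk⟩ := hG g
    refine ⟨k, ?_⟩
    have h1 : ((g : GL (Fin n) ℂ)) ^ (p ^ k) = 1 := by
      rw [← Subgroup.coe_pow, hk, Subgroup.coe_one]
    have := hpowv i g (p ^ k)
    rw [h1, TL_one] at this
    have h2 : ((χ i g) ^ (p ^ k) - 1) • (b i : Fin n → ℂ) = 0 := by
      rw [sub_smul, one_smul]
      simp only [Module.End.one_apply] at this
      rw [← this, sub_self]
    rcases smul_eq_zero.1 h2 with h | h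
    · exact sub_eq_zero.1 h
    · exact absurd h (b.ne_zero i)
  have hchine : ∀ i (g : G), χ i g ≠ 0 := by
    intro i g h0
    obtain ⟨k, hk⟩ := hroot i g
    rw [h0, zero_pow (pow_pos hp.pos k).ne'] at hk
    exact zero_ne_one hk
  -- prime factor of f
  have hfnu : ¬IsUnit f := by
    intro hu
    obtain ⟨v, hv⟩ := hu.exists_right_inv
    have := congrArg (eval (0 : Fin n → ℂ)) hv
    rw [map_mul, map_one] at this
    have hc0 : eval (0 : Fin n → ℂ) f = 0 := by
      rw [eval_zero]
      apply hfh.coeff_eq_zero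
      rw [map_zero]
      omega
    rw [hc0, zero_mul] at this
    exact zero_ne_one this
  obtain ⟨q, hqirr, hqf⟩ := WfDvdMonoid.exists_irreducible_factor hfnu hf0
  have hq : Prime q := (UniqueFactorizationMonoid.irreducible_iff_prime).1 hqirr
  obtain ⟨w, hfqw⟩ := hqf
  have hw0 : w ≠ 0 := by rintro rfl; rw [mul_zero] at hfqw; exact hf0 hfqw
  obtain ⟨e, e', hee', hqe, -⟩ :=
    isHomogeneous_of_mul (hfqw ▸ hfh) hq.ne_zero hw0
  have he1 : 1 ≤ e := by
    rcases Nat.eq_zero_or_pos e with h0 | h; swap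
    · exact h
    exfalso
    rw [h0] at hqe
    have := eq_C_of_isHomogeneous_zero hqe
    apply hqirr.not_isUnit
    rw [this]
    refine IsUnit.map _ (isUnit_iff_ne_zero.2 ?_)
    intro hc
    apply hq.ne_zero
    rw [this, hc, map_zero]
  have hed : e ≤ d := by omega
  -- orbit argument: q is semi-invariant
  have hdvdpow : ∀ g : G, ∃ N : ℕ,
      f ∣ (subA ((g : GL (Fin n) ℂ) : Matrix (Fin n) (Fin n) ℂ) f) ^ N := by
    intro g
    apply dvd_pow_of_vanish
    intro x hx
    rw [eval_subA]
    exact hZ g x hx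
  have hstep : ∀ (g : G) (r : MvPolynomial (Fin n) ℂ), Prime r → r ∣ f →
      subA ((g : GL (Fin n) ℂ) : Matrix (Fin n) (Fin n) ℂ) r ∣ f := by
    intro g r hr hrf
    obtain ⟨N, hN⟩ := hdvdpow g⁻¹
    have h1 : subA ((g : GL (Fin n) ℂ) : Matrix (Fin n) (Fin n) ℂ) f ∣ f ^ N := by
      have := map_dvd (subA ((g : GL (Fin n) ℂ) : Matrix (Fin n) (Fin n) ℂ)) hN
      rw [map_pow, subA_subA] at this
      have hmat : ((g⁻¹ : G) : GL (Fin n) ℂ).1 * ((g : GL (Fin n) ℂ) : Matrix (Fin n) (Fin n) ℂ) = 1 := by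
        rw [show ((g⁻¹ : G) : GL (Fin n) ℂ) = ((g : GL (Fin n) ℂ))⁻¹ from rfl]
        exact (g : GL (Fin n) ℂ).inv_mul
      rwa [hmat, subA_one] at this
    have h2 : subA ((g : GL (Fin n) ℂ) : Matrix (Fin n) (Fin n) ℂ) r
        ∣ subA ((g : GL (Fin n) ℂ) : Matrix (Fin n) (Fin n) ℂ) f := map_dvd _ hrf
    exact (prime_subA hr).dvd_of_dvd_pow (h2.trans h1)
  have key : ∀ g : G,
      Associated q (subA ((g : GL (Fin n) ℂ) : Matrix (Fin n) (Fin n) ℂ) q) := by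
    intro g
    obtain ⟨k, hk⟩ := hG g
    set pk := p ^ k with hpk
    have hpk0 : 0 < pk := pow_pos hp.pos k
    set gg : GL (Fin n) ℂ := (g : GL (Fin n) ℂ) with hgg
    set rm : ℕ → MvPolynomial (Fin n) ℂ := fun m => subA ((gg ^ m : GL (Fin n) ℂ) : Matrix (Fin n) (Fin n) ℂ) q with hrm
    have hm1 : ∀ a c : ℕ, subA ((gg ^ a : GL (Fin n) ℂ) : Matrix (Fin n) (Fin n) ℂ) (rm c) = rm (c + a) := by
      intro a c
      rw [hrm]
      simp only
      rw [subA_subA, ← Units.val_mul, ← pow_add]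
    have hrm0 : rm 0 = q := by
      rw [hrm]; simp only [pow_zero, Units.val_one]; exact subA_one q
    have hrmpk : rm pk = q := by
      have hgp : g ^ pk = 1 := by rw [hpk]; exact hk
      have : gg ^ pk = 1 := by
        rw [hgg, ← Subgroup.coe_pow, hgp, Subgroup.coe_one]
      rw [hrm]; simp only [this, Units.val_one]; exact subA_one q
    have hprime : ∀ m, Prime (rm m) := fun m => prime_subA hq
    have hhom : ∀ m, (rm m).IsHomogeneous e := fun m => subA_isHomogeneous _ hqe
    have hdvd : ∀ m, rm m ∣ f := by
      intro m
      induction m with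
      | zero => rw [hrm0]; exact ⟨w, hfqw⟩
      | succ m ih =>
          have := hstep g (rm m) (hprime m) ih
          have h1 : subA ((gg : Matrix (Fin n) (Fin n) ℂ)) (rm m) = rm (m + 1) := by
            have := hm1 1 m
            rwa [pow_one] at this
          rwa [h1] at this
    -- minimal period
    have hPex : ∃ t, 0 < t ∧ Associated q (rm t) := ⟨pk, hpk0, by rw [hrmpk]⟩
    set t := Nat.find hPex with htdef
    obtain ⟨ht0, htassoc⟩ := Nat.find_spec hPex
    rw [← htdef] at ht0 htassoc
    have hmin : ∀ s, s < t → ¬(0 < s ∧ Associated q (rm s)) := fun s hs => Nat.find_min hPex hs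
    -- additivity of the period property
    have hadd : ∀ a c : ℕ, Associated q (rm a) → Associated q (rm c) → Associated q (rm (a + c)) := by
      intro a c h1 h2
      have h3 := assoc_subA (gg ^ a) h2
      rw [hm1 a c] at h3
      exact h1.trans (by rwa [Nat.add_comm c a] at h3)
    have hts : ∀ s : ℕ, Associated q (rm (t * s)) := by
      intro s
      induction s with
      | zero => rw [Nat.mul_zero, hrm0]
      | succ s ih =>
          rw [Nat.mul_succ]
          exact hadd _ _ ih htassoc
    have htdvd : t ∣ pk := by
      set a := t * (pk / t) with hadef
      set rem := pk % t with hremdef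
      have hsum : a + rem = pk := Nat.div_add_mod pk t
      have h1 : Associated q (rm (a + rem)) := by
        rw [hsum, hrmpk]
      have h2 : rm (a + rem) = subA ((gg ^ a : GL (Fin n) ℂ) : Matrix (Fin n) (Fin n) ℂ) (rm rem) := by
        rw [hm1 a rem, Nat.add_comm rem a]
      have h3 : Associated q (rm a) := hts (pk / t)
      -- apply inverse of gg^a
      have h4 := assoc_subA ((gg ^ a)⁻¹) h1
      rw [h2, subA_subA, ← Units.val_mul, mul_inv_cancel, Units.val_one, subA_one] at h4
      have h5 := assoc_subA ((gg ^ a)⁻¹) h3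
      have h6 : subA (((gg ^ a)⁻¹ : GL (Fin n) ℂ) : Matrix (Fin n) (Fin n) ℂ) (rm a) = q := by
        rw [hrm]
        simp only
        rw [subA_subA, ← Units.val_mul, mul_inv_cancel, Units.val_one, subA_one]
      rw [h6] at h5
      have h7 : Associated q (rm rem) := (h5.symm.trans h4)
      rcases Nat.eq_zero_or_pos rem with h | h
      · exact Nat.dvd_of_mod_eq_zero h
      · exact absurd ⟨h, h7⟩ (hmin rem (Nat.mod_lt _ ht0))
    have hne : ∀ a c : ℕ, a < c → c < t → ¬ Associated (rm a) (rm c) := by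
      intro a c hac hct hassoc
      have h1 := assoc_subA ((gg ^ a)⁻¹) hassoc
      have h2 : subA (((gg ^ a)⁻¹ : GL (Fin n) ℂ) : Matrix (Fin n) (Fin n) ℂ) (rm a) = q := by
        rw [hrm]
        simp only
        rw [subA_subA, ← Units.val_mul, mul_inv_cancel, Units.val_one, subA_one]
      have h3 : subA (((gg ^ a)⁻¹ : GL (Fin n) ℂ) : Matrix (Fin n) (Fin n) ℂ) (rm c) = rm (c - a) := by
        rw [hrm]
        simp only
        rw [subA_subA, ← Units.val_mul]
        congr 2
        have hpow : gg ^ c = gg ^ (c - a) * gg ^ a := by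
          rw [← pow_add, Nat.sub_add_cancel hac.le]
        rw [hpow, mul_inv_cancel_right]
      rw [h2, h3] at h1
      exact hmin (c - a) (by omega) ⟨by omega, h1⟩
    -- product of the orbit divides f
    have hproddvd : ∀ s : ℕ, s ≤ t → (∏ m ∈ Finset.range s, rm m) ∣ f := by
      intro s
      induction s with
      | zero => intro _; simp
      | succ s ih =>
          intro hs1
          obtain ⟨h', hh'⟩ := ih (by omega)
          have hnd : ¬ rm s ∣ ∏ m ∈ Finset.range s, rm m := by
            intro hdd
            obtain ⟨a, ha, hdd'⟩ := (Prime.dvd_finset_prod_iff (hprime s) _).1 hdd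
            rw [Finset.mem_range] at ha
            exact hne a s ha (by omega) ((hprime s).associated_of_dvd (hprime a) hdd').symm
          have hrs : rm s ∣ (∏ m ∈ Finset.range s, rm m) * h' := by
            rw [← hh']; exact hdvd s
          have hsh : rm s ∣ h' := ((hprime s).dvd_or_dvd hrs).resolve_left hnd
          rw [Finset.prod_range_succ, hh']
          exact mul_dvd_mul_left _ hsh
    have hProd : (∏ m ∈ Finset.range t, rm m) ∣ f := hproddvd t le_rfl
    have hProdhom : (∏ m ∈ Finset.range t, rm m).IsHomogeneous (t * e) := by
      have := IsHomogeneous.prod (Finset.range t) rm (fun _ => e) (fun m _ => hhom m)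
      simpa [Finset.sum_const, Finset.card_range, smul_eq_mul] using this
    have hProdne : (∏ m ∈ Finset.range t, rm m) ≠ 0 :=
      Finset.prod_ne_zero_iff.2 fun m _ => (hprime m).ne_zero
    obtain ⟨w', hw'⟩ := hProd
    have hw'0 : w' ≠ 0 := by rintro rfl; rw [mul_zero] at hw'; exact hf0 hw'
    obtain ⟨e1, e2, hsum12, hP1, -⟩ := isHomogeneous_of_mul (hw' ▸ hfh) hProdne hw'0
    have he1te : e1 = t * e := hP1.inj_right hProdhom hProdne
    have htd : t * e ≤ d := by omega
    have htled : t ≤ d := le_trans (Nat.le_mul_of_pos_right t (by omega)) htd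
    -- t is a p-power at most d < p, hence t = 1
    obtain ⟨j, hjk, hjt⟩ := (Nat.dvd_prime_pow hp).1 htdvd
    have ht1 : t = 1 := by
      rcases Nat.eq_zero_or_pos j with h0 | hj
      · rw [hjt, h0, pow_zero]
      · exfalso
        have : p ≤ t := by
          rw [hjt]
          calc p = p ^ 1 := (pow_one p).symm
          _ ≤ p ^ j := Nat.pow_le_pow_right hp.pos hj
        omega
    rw [ht1] at htassoc
    have : rm 1 = subA ((g : GL (Fin n) ℂ) : Matrix (Fin n) (Fin n) ℂ) q := by
      rw [hrm]; simp only [pow_one]; rfl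
    rwa [this] at htassoc
  -- semi-invariance with explicit constant
  have hsemi : ∀ g : G, ∃ c : ℂ, c ≠ 0 ∧
      subA ((g : GL (Fin n) ℂ) : Matrix (Fin n) (Fin n) ℂ) q = C c * q := by
    intro g
    obtain ⟨u, hu⟩ := key g
    have hune : (u : MvPolynomial (Fin n) ℂ) ≠ 0 := Units.ne_zero u
    have h1 : (q * (u : MvPolynomial (Fin n) ℂ)).IsHomogeneous e := by
      rw [hu]; exact subA_isHomogeneous _ hqe
    obtain ⟨e1, e2, hsum, hq1, hu1⟩ := isHomogeneous_of_mul h1 hq.ne_zero hune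
    have he1e : e1 = e := hq1.inj_right hqe hq.ne_zero
    have he20 : e2 = 0 := by omega
    rw [he20] at hu1
    have hC := eq_C_of_isHomogeneous_zero hu1
    refine ⟨coeff 0 (u : MvPolynomial (Fin n) ℂ), ?_, ?_⟩
    · intro h0
      apply hune
      rw [hC, h0, map_zero]
    · rw [← hu, mul_comm]
      conv_lhs => rw [hC]
  -- case split
  by_cases hzero : ∃ i, eval (b i : Fin n → ℂ) q = 0
  · obtain ⟨i, hi⟩ := hzero
    refine ⟨Projectivization.mk ℂ (b i) (b.ne_zero i), ?_, ?_⟩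
    · rw [hR]
      show eval (Projectivization.mk ℂ (b i) (b.ne_zero i)).rep f = 0
      rw [hrep]
      rw [hfqw, map_mul, hi, zero_mul]
    · intro g0 hg0
      set g : G := ⟨g0, hg0⟩ with hgdef
      rw [glAct_mk]
      rw [Projectivization.mk_eq_mk_iff]
      refine ⟨Units.mk0 (χ i g) (hchine i g), ?_⟩
      show (χ i g) • (b i : Fin n → ℂ) = _
      rw [← hχ i g, TL_apply]
  · push_neg at hzero
    -- all eigenvalue functions agree: G acts by scalars
    have hchi : ∀ (g : G) i j, χ i g = χ j g := by
      intro g i j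
      obtain ⟨c, hc0, hc⟩ := hsemi g
      have hev : ∀ i', (χ i' g) ^ e = c := by
        intro i'
        have h1 : eval (((g : GL (Fin n) ℂ) : Matrix (Fin n) (Fin n) ℂ).mulVec (b i')) q
            = c * eval (b i') q := by
          rw [← eval_subA, hc, map_mul, eval_C]
        have h2 : ((g : GL (Fin n) ℂ) : Matrix (Fin n) (Fin n) ℂ).mulVec (b i')
            = χ i' g • (b i' : Fin n → ℂ) := by
          rw [← TL_apply]; exact hχ i' g
        rw [h2, eval_smul_of_isHomogeneous hqe] at h1
        exact mul_right_cancel₀ (hzero i') h1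
      have hij : (χ i g) ^ e = (χ j g) ^ e := by rw [hev i, hev j]
      obtain ⟨k1, hk1⟩ := hroot i g
      obtain ⟨k2, hk2⟩ := hroot j g
      set u : ℂ := χ i g * (χ j g)⁻¹ with hu
      have hjne := hchine j g
      have hue : u ^ e = 1 := by
        rw [hu, mul_pow, inv_pow, hij, mul_inv_cancel₀ (pow_ne_zero _ hjne)]
      have hupk : u ^ (p ^ (k1 + k2)) = 1 := by
        have e1 : χ i g ^ p ^ (k1 + k2) = 1 := by
          rw [pow_add, pow_mul, hk1, one_pow]
        have e2 : χ j g ^ p ^ (k1 + k2) = 1 := by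
          rw [pow_add, mul_comm (p ^ k1) (p ^ k2), pow_mul, hk2, one_pow]
        rw [hu, mul_pow, inv_pow, e1, e2, inv_one, mul_one]
      have hord1 : orderOf u ∣ e := orderOf_dvd_of_pow_eq_one hue
      have hord2 : orderOf u ∣ p ^ (k1 + k2) := orderOf_dvd_of_pow_eq_one hupk
      have hcop : Nat.Coprime (p ^ (k1 + k2)) e := by
        apply Nat.Coprime.pow_left
        rw [hp.coprime_iff_not_dvd]
        intro hpe
        have := Nat.le_of_dvd (by omega) hpe
        omega
      have : orderOf u = 1 := Nat.dvd_one.1 (hcop ▸ Nat.dvd_gcd hord2 hord1)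
      have hu1 : u = 1 := orderOf_eq_one_iff.1 this
      rw [hu, mul_inv_eq_one₀ hjne] at hu1
      exact hu1
    -- f has a nontrivial zero
    have hnontriv : ∃ v : Fin n → ℂ, v ≠ 0 ∧ eval v f = 0 := by
      by_contra hcon
      push_neg at hcon
      set i0 : Fin n := ⟨0, by omega⟩ with hi0
      set i1 : Fin n := ⟨1, by omega⟩ with hi1
      have hXdvd : ∀ i : Fin n, q ∣ X i := by
        intro i
        obtain ⟨N, hN⟩ := dvd_pow_of_vanish f (X i)
          (by
            intro x hx
            by_cases hx0 : x = 0
            · subst hx0; simp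
            · exact absurd hx (hcon x hx0))
        exact hq.dvd_of_dvd_pow ((dvd_trans ⟨w, hfqw⟩ hN))
      -- analyze q ∣ X i
      have hfactor : ∀ i : Fin n, ∃ c : ℂ, c ≠ 0 ∧ X i = q * C c := by
        intro i
        obtain ⟨wi, hwi⟩ := hXdvd i
        have hwine : wi ≠ 0 := by
          rintro rfl
          rw [mul_zero] at hwi
          exact X_ne_zero i hwi
        obtain ⟨d1, d2, hd12, hq1, hw1⟩ :=
          isHomogeneous_of_mul (hwi ▸ isHomogeneous_X ℂ i) hq.ne_zero hwine
        have hd1 : d1 = e := hq1.inj_right hqe hq.ne_zero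
        -- d1 ≥ 1 since q is not a unit
        have hd1pos : 1 ≤ d1 := by
          rcases Nat.eq_zero_or_pos d1 with h0 | h; swap
          · exact h
          exfalso
          rw [h0] at hq1
          have hCq := eq_C_of_isHomogeneous_zero hq1
          apply hqirr.not_isUnit
          rw [hCq]
          refine IsUnit.map _ (isUnit_iff_ne_zero.2 ?_)
          intro hcc
          apply hq.ne_zero
          rw [hCq, hcc, map_zero]
        have hd20 : d2 = 0 := by omega
        rw [hd20] at hw1
        have hCw := eq_C_of_isHomogeneous_zero hw1
        refine ⟨coeff 0 wi, ?_, ?_⟩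
        · intro h0; apply hwine; rw [hCw, h0, map_zero]
        · conv_lhs => rw [hwi]
          conv_lhs => rw [hCw]
      obtain ⟨c0, hc00, hc0⟩ := hfactor i0
      obtain ⟨c1, hc10, hc1⟩ := hfactor i1
      -- evaluate at the indicator of i0
      set v : Fin n → ℂ := fun j => if j = i0 then 1 else 0 with hv
      have h01 : i0 ≠ i1 := by
        rw [hi0, hi1]
        intro h
        exact absurd (congrArg Fin.val h) (by simp)
      have hv0 : eval v (X i0) = 1 := by rw [eval_X]; simp [hv]
      have hv1 : eval v (X i1) = 0 := by rw [eval_X]; simp [hv, h01.symm]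
      rw [hc1, map_mul, eval_C] at hv1
      rcases mul_eq_zero.1 hv1 with h | h
      · rw [hc0, map_mul, eval_C, h, zero_mul] at hv0
        exact zero_ne_one hv0
      · exact hc10 h
    obtain ⟨v0, hv00, hv0⟩ := hnontriv
    refine ⟨Projectivization.mk ℂ v0 hv00, ?_, ?_⟩
    · rw [hR]
      show eval (Projectivization.mk ℂ v0 hv00).rep f = 0
      rw [hrep]
      exact hv0
    · intro g0 hg0
      set g : G := ⟨g0, hg0⟩ with hgdef
      haveI : Nonempty (Fin n) := ⟨⟨0, by omega⟩⟩
      have : Nonempty _ := b.index_nonempty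
      obtain ⟨i0⟩ := this
      have hTg : TL g0 = (χ i0 g) • (1 : Module.End ℂ (Fin n → ℂ)) := by
        apply b.ext
        intro i
        rw [LinearMap.smul_apply, Module.End.one_apply]
        have := hχ i g
        rw [show ((g : GL (Fin n) ℂ)) = g0 from rfl] at this
        rw [this, hchi g i i0]
      rw [glAct_mk]
      rw [Projectivization.mk_eq_mk_iff]
      refine ⟨Units.mk0 (χ i0 g) (hchine i0 g), ?_⟩
      show (χ i0 g) • v0 = _
      have : (g0 : Matrix (Fin n) (Fin n) ℂ).mulVec v0 = TL g0 v0 := (TL_apply g0 v0).symm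
      rw [this, hTg, LinearMap.smul_apply, Module.End.one_apply]
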